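/- arXiv:math/0510371 — 5 statements merged into one kernel-verified Lean document; each statement's English description precedes it below -/
import Mathlib

section
/- Let Q : ℤ → ℝ, P : ℤ → ℂ, and let C : ℤ → ℂ satisfy the three-term recurrence Q_{n+1} C_{n+1} + P_n C_n + Q_n C_{n−1} = 0 for all n ∈ ℤ. Then for every integer N ≥ 0 one has ∑_{n=−N}^{N} |C_n|² · Im(P_n) = − Q_{N+1} · Im( C_{N+1} · conj(C_N) ) − Q_{−N} · Im( C_{−N−1} · conj(C_{−N}) ). -/
open Complex

/-- Identity (1.id): for solutions of the two-sided three-term recurrence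
`Q_{n+1} C_{n+1} + P_n C_n + Q_n C_{n-1} = 0` with real off-diagonal
coefficients `Q_n`, one has
`∑_{n=-N}^{N} |C_n|² Im P_n
  = -Q_{N+1} Im(C_{N+1} conj C_N) - Q_{-N} Im(C_{-N-1} conj C_{-N})`. -/
theorem recurrence_identity (Q : ℤ → ℝ) (P : ℤ → ℂ) (C : ℤ → ℂ)
    (hrec : ∀ n : ℤ, (Q (n + 1) : ℂ) * C (n + 1) + P n * C n + (Q n : ℂ) * C (n - 1) = 0) :
    ∀ N : ℕ,
      ∑ n ∈ Finset.Icc (-(N : ℤ)) (N : ℤ), ‖C n‖ ^ 2 * (P n).im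
        = -(Q ((N : ℤ) + 1)) * (C ((N : ℤ) + 1) * (starRingEnd ℂ) (C (N : ℤ))).im
          - Q (-(N : ℤ)) * (C (-(N : ℤ) - 1) * (starRingEnd ℂ) (C (-(N : ℤ)))).im := by
  set f : ℤ → ℝ := fun n => Q (n + 1) * (C (n + 1) * (starRingEnd ℂ) (C n)).im with hf
  have point : ∀ n : ℤ, ‖C n‖ ^ 2 * (P n).im = f (n - 1) - f n := by
    intro n
    have h := hrec n
    have hre := congrArg Complex.re h
    have him := congrArg Complex.im h
    simp only [Complex.add_re, Complex.add_im, Complex.mul_re, Complex.mul_im,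
      Complex.ofReal_re, Complex.ofReal_im, Complex.zero_re, Complex.zero_im] at hre him
    have hnorm : ‖C n‖ ^ 2 = (C n).re ^ 2 + (C n).im ^ 2 := by
      rw [Complex.sq_norm, Complex.normSq_apply]; ring
    simp only [hf, Complex.mul_im, Complex.conj_re, Complex.conj_im, sub_add_cancel, hnorm]
    linear_combination (C n).re * him - (C n).im * hre
  intro N
  have key : ∀ M : ℕ, ∑ n ∈ Finset.Icc (-(M : ℤ)) (M : ℤ), (f (n - 1) - f n)
      = f (-(M : ℤ) - 1) - f (M : ℤ) := by
    intro M
    induction M with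
    | zero => simp
    | succ M ih =>
      have hset : Finset.Icc (-(M + 1 : ℤ)) ((M : ℤ) + 1)
          = insert (-(M + 1 : ℤ)) (insert ((M : ℤ) + 1) (Finset.Icc (-(M : ℤ)) (M : ℤ))) := by
        ext x; simp only [Finset.mem_Icc, Finset.mem_insert]; omega
      push_cast
      rw [hset, Finset.sum_insert, Finset.sum_insert, ih]
      · ring_nf
      · simp only [Finset.mem_Icc]; omega
      · simp only [Finset.mem_insert, Finset.mem_Icc]; omega
  calc ∑ n ∈ Finset.Icc (-(N : ℤ)) (N : ℤ), ‖C n‖ ^ 2 * (P n).im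
      = ∑ n ∈ Finset.Icc (-(N : ℤ)) (N : ℤ), (f (n - 1) - f n) := by
        exact Finset.sum_congr rfl fun n _ => point n
    _ = f (-(N : ℤ) - 1) - f (N : ℤ) := key N
    _ = _ := by
        simp only [hf]
        ring_nf
        simp only [Complex.mul_im, Complex.conj_re, Complex.conj_im]
        ring
end

section
/- For every α > 0 there exist functions u_0, u_1 ∈ H¹(ℝ) such that ∫_ℝ ( |u_0′(x)|² + |u_1′(x)|² + |u_1(x)|² ) dx < α · Re( u_1(0) · conj(u_0(0)) ). -/
open Complex MeasureTheory

/-- `f` belongs to the Sobolev space `H¹(ℝ)` with (distributional) derivative `f'`: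
`f ∈ L²(ℝ)`, `f' ∈ L²(ℝ)`, and `f` is the continuous (absolutely continuous)
representative, i.e. `f x = f 0 + ∫_0^x f'`. -/
def MemH1 (f f' : ℝ → ℂ) : Prop :=
  MemLp f 2 volume ∧ MemLp f' 2 volume ∧
    ∀ x : ℝ, f x = f 0 + ∫ t in (0 : ℝ)..x, f' t

open Set Real MeasureTheory Filter

namespace NegValAux

noncomputable def g (c δ : ℝ) : ℝ → ℂ := fun x => ((c * Real.exp (-δ * |x|) : ℝ) : ℂ)

noncomputable def g' (c δ : ℝ) : ℝ → ℂ :=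
  fun x => ((-(c * δ) * Real.sign x * Real.exp (-δ * |x|) : ℝ) : ℂ)

lemma measurable_sign : Measurable Real.sign := by
  have h : Real.sign = fun r : ℝ => if r < 0 then (-1 : ℝ) else if 0 < r then 1 else 0 := rfl
  rw [h]
  exact Measurable.ite measurableSet_Iio measurable_const
    (Measurable.ite measurableSet_Ioi measurable_const measurable_const)

lemma ae_ne_zero : ∀ᵐ t : ℝ, t ≠ (0 : ℝ) := by
  have h : ({(0 : ℝ)}ᶜ : Set ℝ) ∈ ae (volume : Measure ℝ) :=
    compl_mem_ae_iff.mpr (measure_singleton 0)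
  filter_upwards [h] with t ht
  exact ht

lemma int_exp_Ioi {b : ℝ} (hb : 0 < b) :
    ∫ x in Ioi (0 : ℝ), Real.exp (-b * x) = 1 / b := by
  have hder : ∀ x ∈ Ioi (0 : ℝ),
      HasDerivAt (fun x => -Real.exp (-b * x) / b) (Real.exp (-b * x)) x := by
    intro x _
    have h := (((hasDerivAt_id x).const_mul (-b)).exp.neg.div_const b)
    refine HasDerivAt.congr_deriv (f := fun x => -Real.exp (-b * x) / b) h ?_
    field_simp
    rfl
  have htend : Tendsto (fun x => -Real.exp (-b * x) / b) atTop (nhds 0) := by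
    have : Tendsto (fun x => -Real.exp (-b * x) / b) atTop (nhds (-0 / b)) :=
      (Tendsto.neg (tendsto_exp_atBot.comp
        (tendsto_id.const_mul_atTop_of_neg (neg_neg_iff_pos.2 hb)))).div_const b
    simpa using this
  have hcont : ContinuousWithinAt (fun x => -Real.exp (-b * x) / b) (Ici (0 : ℝ)) 0 :=
    (((Real.continuous_exp.comp (continuous_const.mul continuous_id)).neg.div_const
      b).continuousWithinAt)
  have := integral_Ioi_of_hasDerivAt_of_tendsto hcont hder
    (exp_neg_integrableOn_Ioi 0 hb) htend
  rw [this]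
  simp [neg_div]

lemma exp_abs_integrable {b : ℝ} (hb : 0 < b) :
    Integrable (fun x : ℝ => Real.exp (-b * |x|)) := by
  have h1 : IntegrableOn (fun x : ℝ => Real.exp (-b * |x|)) (Ioi 0) := by
    refine (exp_neg_integrableOn_Ioi 0 hb).congr_fun ?_ measurableSet_Ioi
    intro x hx
    show Real.exp (-b * x) = Real.exp (-b * |x|)
    rw [abs_of_pos hx]
  have h2 : IntegrableOn (fun x : ℝ => Real.exp (-b * |x|)) (Iic 0) := by
    rw [← Measure.map_neg_eq_self (volume : Measure ℝ)]
    have m : MeasurableEmbedding fun x : ℝ => -x := (Homeomorph.neg ℝ).measurableEmbedding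
    rw [m.integrableOn_map_iff]
    simp_rw [Function.comp_def, abs_neg, neg_preimage, neg_Iic, neg_zero]
    exact (integrableOn_Ici_iff_integrableOn_Ioi (by finiteness)).mpr h1
  have h := h2.union h1
  rwa [Iic_union_Ioi, integrableOn_univ] at h

lemma exp_abs_integral {b : ℝ} (hb : 0 < b) :
    ∫ x : ℝ, Real.exp (-b * |x|) = 2 / b := by
  have h := integral_comp_abs (f := fun y : ℝ => Real.exp (-b * y))
  rw [int_exp_Ioi hb] at h
  rw [h]
  ring

lemma expsq (a : ℝ) : Real.exp a ^ 2 = Real.exp (2 * a) := by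
  rw [pow_two, ← Real.exp_add, two_mul]

lemma normsq_g (c δ : ℝ) (x : ℝ) :
    ‖g c δ x‖ ^ 2 = c ^ 2 * Real.exp (-(2 * δ) * |x|) := by
  rw [g, Complex.norm_real, Real.norm_eq_abs, _root_.sq_abs, mul_pow, expsq]
  rw [show 2 * (-δ * |x|) = -(2 * δ) * |x| by ring]

lemma normsq_g' (c δ : ℝ) {x : ℝ} (hx : x ≠ 0) :
    ‖g' c δ x‖ ^ 2 = (c ^ 2 * δ ^ 2) * Real.exp (-(2 * δ) * |x|) := by
  rw [g', Complex.norm_real, Real.norm_eq_abs, _root_.sq_abs]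
  have hs : Real.sign x ^ 2 = 1 := by
    rcases Real.sign_apply_eq_of_ne_zero x hx with h | h <;> rw [h] <;> norm_num
  have : (-(c * δ) * Real.sign x * Real.exp (-δ * |x|)) ^ 2
      = (c ^ 2 * δ ^ 2) * (Real.sign x ^ 2) * (Real.exp (-δ * |x|)) ^ 2 := by ring
  rw [this, hs, mul_one, expsq, show 2 * (-δ * |x|) = -(2 * δ) * |x| by ring]

lemma normsq_g'_le (c δ : ℝ) (x : ℝ) :
    ‖g' c δ x‖ ^ 2 ≤ (c ^ 2 * δ ^ 2) * Real.exp (-(2 * δ) * |x|) := by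
  rcases eq_or_ne x 0 with rfl | hx
  · simp [g']
    positivity
  · exact le_of_eq (normsq_g' c δ hx)

lemma meas_g (c δ : ℝ) : Measurable (g c δ) :=
  Complex.measurable_ofReal.comp
    ((continuous_const.mul (Real.continuous_exp.comp
      (continuous_const.mul _root_.continuous_abs))).measurable)

lemma meas_g' (c δ : ℝ) : Measurable (g' c δ) :=
  Complex.measurable_ofReal.comp
    (((measurable_const.mul measurable_sign).mul
      ((Real.continuous_exp.comp (continuous_const.mul _root_.continuous_abs)).measurable)))

lemma int_gsq (c : ℝ) {δ : ℝ} (hδ : 0 < δ) :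
    ∫ x : ℝ, ‖g c δ x‖ ^ 2 = c ^ 2 / δ := by
  simp_rw [normsq_g]
  rw [integral_const_mul, exp_abs_integral (by positivity : (0:ℝ) < 2 * δ)]
  field_simp

lemma int_g'sq (c : ℝ) {δ : ℝ} (hδ : 0 < δ) :
    ∫ x : ℝ, ‖g' c δ x‖ ^ 2 = c ^ 2 * δ := by
  have hae : (fun x : ℝ => ‖g' c δ x‖ ^ 2)
      =ᵐ[volume] fun x : ℝ => (c ^ 2 * δ ^ 2) * Real.exp (-(2 * δ) * |x|) := by
    filter_upwards [ae_ne_zero] with x hx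
    exact normsq_g' c δ hx
  rw [integral_congr_ae hae, integral_const_mul,
    exp_abs_integral (by positivity : (0:ℝ) < 2 * δ)]
  field_simp

lemma ftc_real (c : ℝ) {δ : ℝ} (hδ : 0 < δ) (x : ℝ) :
    ∫ t in (0:ℝ)..x, (-(c * δ) * Real.sign t * Real.exp (-δ * |t|))
      = c * Real.exp (-δ * |x|) - c := by
  rcases le_or_gt 0 x with hx | hx
  · have h1 : ∫ t in (0:ℝ)..x, (-(c * δ) * Real.sign t * Real.exp (-δ * |t|))
        = ∫ t in (0:ℝ)..x, c * (Real.exp (-δ * t) * -δ) := by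
      apply intervalIntegral.integral_congr_ae
      filter_upwards with t ht
      rw [Set.uIoc_of_le hx] at ht
      rw [Real.sign_of_pos ht.1, abs_of_pos ht.1]
      ring
    rw [h1, intervalIntegral.integral_eq_sub_of_hasDerivAt
      (f := fun t => c * Real.exp (-δ * t))
      (fun t _ => by
        have h := ((hasDerivAt_id t).const_mul (-δ)).exp.const_mul c
        refine HasDerivAt.congr_deriv (f := fun t => c * Real.exp (-δ * t)) h ?_
        simp only [id_eq, mul_one])
      ((by fun_prop : Continuous fun t : ℝ => c * (Real.exp (-δ * t) * -δ)).intervalIntegrable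
        _ _)]
    rw [_root_.abs_of_nonneg hx]
    simp
  · have h1 : ∫ t in (0:ℝ)..x, (-(c * δ) * Real.sign t * Real.exp (-δ * |t|))
        = ∫ t in (0:ℝ)..x, c * (Real.exp (δ * t) * δ) := by
      apply intervalIntegral.integral_congr_ae
      filter_upwards [ae_ne_zero] with t hne ht
      rw [Set.uIoc_of_ge hx.le] at ht
      have htneg : t < 0 := lt_of_le_of_ne ht.2 hne
      rw [Real.sign_of_neg htneg, abs_of_neg htneg]
      ring_nf
    rw [h1, intervalIntegral.integral_eq_sub_of_hasDerivAt
      (f := fun t => c * Real.exp (δ * t))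
      (fun t _ => by
        have h := ((hasDerivAt_id t).const_mul δ).exp.const_mul c
        refine HasDerivAt.congr_deriv (f := fun t => c * Real.exp (δ * t)) h ?_
        simp only [id_eq, mul_one])
      ((by fun_prop : Continuous fun t : ℝ => c * (Real.exp (δ * t) * δ)).intervalIntegrable
        _ _)]
    rw [abs_of_neg hx]
    simp only [mul_zero, Real.exp_zero, mul_one, neg_mul, neg_neg]
    ring

lemma memH1_g (c : ℝ) {δ : ℝ} (hδ : 0 < δ) : MemH1 (g c δ) (g' c δ) := by
  refine ⟨?_, ?_, ?_⟩
  · rw [memLp_two_iff_integrable_sq_norm (meas_g c δ).aestronglyMeasurable]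
    have h : Integrable (fun x : ℝ => c ^ 2 * Real.exp (-(2 * δ) * |x|)) :=
      (exp_abs_integrable (by positivity : (0:ℝ) < 2 * δ)).const_mul _
    exact h.congr (Filter.Eventually.of_forall fun x => (normsq_g c δ x).symm)
  · rw [memLp_two_iff_integrable_sq_norm (meas_g' c δ).aestronglyMeasurable]
    have hb : Integrable (fun x : ℝ => (c ^ 2 * δ ^ 2) * Real.exp (-(2 * δ) * |x|)) :=
      (exp_abs_integrable (by positivity : (0:ℝ) < 2 * δ)).const_mul _
    refine hb.mono' ((meas_g' c δ).norm.pow_const 2).aestronglyMeasurable ?_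
    filter_upwards with x
    rw [Real.norm_eq_abs, _root_.abs_of_nonneg (by positivity)]
    exact normsq_g'_le c δ x
  · intro x
    have h := ftc_real c hδ x
    have hcast : ∫ t in (0:ℝ)..x, g' c δ t
        = ((∫ t in (0:ℝ)..x, (-(c * δ) * Real.sign t * Real.exp (-δ * |t|)) : ℝ) : ℂ) := by
      rw [← intervalIntegral.integral_ofReal]
      rfl
    rw [hcast, h]
    simp only [g, abs_zero, mul_zero, neg_zero, Real.exp_zero, mul_one]
    push_cast
    ring

end NegValAux

/-- The existence claim in the proof of Theorem 4.2(2): for every `α > 0` there are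
`u₀, u₁ ∈ H¹(ℝ)` with
`∫ (|u₀'|² + |u₁'|² + |u₁|²) < α Re(u₁(0) conj(u₀(0)))`. -/
theorem negative_value_of_form (α : ℝ) (hα : 0 < α) :
    ∃ u₀ u₀' u₁ u₁' : ℝ → ℂ, MemH1 u₀ u₀' ∧ MemH1 u₁ u₁' ∧
      (∫ x : ℝ, ‖u₀' x‖ ^ 2) + (∫ x : ℝ, ‖u₁' x‖ ^ 2) + (∫ x : ℝ, ‖u₁ x‖ ^ 2)
        < α * (u₁ 0 * (starRingEnd ℂ) (u₀ 0)).re := by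
  classical
  have hα' : α ≠ 0 := ne_of_gt hα
  have hδ : (0:ℝ) < α ^ 2 / 16 := by positivity
  refine ⟨NegValAux.g (4 / α) (α ^ 2 / 16), NegValAux.g' (4 / α) (α ^ 2 / 16),
    NegValAux.g 1 1, NegValAux.g' 1 1,
    NegValAux.memH1_g _ hδ, NegValAux.memH1_g _ one_pos, ?_⟩
  rw [NegValAux.int_g'sq _ hδ, NegValAux.int_g'sq _ one_pos, NegValAux.int_gsq _ one_pos]
  have h0 : (NegValAux.g 1 1 0 * (starRingEnd ℂ) (NegValAux.g (4 / α) (α ^ 2 / 16) 0)).re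
      = 4 / α := by
    simp [NegValAux.g, Complex.conj_ofReal, Real.exp_zero]
  rw [h0]
  have h1 : (4 / α) ^ 2 * (α ^ 2 / 16) = 1 := by field_simp; ring
  have h2 : α * (4 / α) = 4 := by field_simp
  rw [h1, h2]
  norm_num
end

section
/- Let α > 1 and M > 0. Then there exists a family u : ℤ → H¹(ℝ) with u_n = 0 for all but finitely many n, such that ∑_{n∈ℤ} ∫_ℝ ( |u_n′(x)|² + n² |u_n(x)|² ) dx − α ∑_{n∈ℤ} (2n−1) · Re( u_n(0) · conj(u_{n−1}(0)) ) + M ∑_{n∈ℤ} ∫_ℝ |u_n(x)|² dx < 0. -/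
open Complex MeasureTheory
open Set Real

noncomputable def phiR (c x : ℝ) : ℝ := Real.exp (-c * |x|)
noncomputable def psiR (c x : ℝ) : ℝ :=
  if 0 < x then -c * Real.exp (-c * x) else c * Real.exp (c * x)

lemma phiR_pos (c x : ℝ) : 0 < phiR c x := Real.exp_pos _

lemma abs_psiR (c x : ℝ) (hc : 0 < c) : |psiR c x| = c * Real.exp (-c * |x|) := by
  unfold psiR
  split_ifs with h
  · rw [_root_.abs_of_nonpos (by nlinarith [Real.exp_pos (-c*x)] : -c * Real.exp (-c*x) ≤ 0),
      _root_.abs_of_pos h]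
    ring
  · push_neg at h
    rw [_root_.abs_of_nonneg (by nlinarith [Real.exp_pos (c*x)] : (0:ℝ) ≤ c * Real.exp (c*x)),
      _root_.abs_of_nonpos h]
    ring_nf

lemma integrable_phiR (c : ℝ) (hc : 0 < c) : Integrable (phiR c) := by
  have hIoi : IntegrableOn (phiR c) (Ioi (0:ℝ)) := by
    have h := exp_neg_integrableOn_Ioi 0 hc
    refine h.congr_fun (fun x hx => ?_) measurableSet_Ioi
    unfold phiR
    rw [abs_of_pos (by exact hx)]
  have hIic : IntegrableOn (phiR c) (Iic (0:ℝ)) := by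
    rw [← Measure.map_neg_eq_self (volume : Measure ℝ)]
    have m : MeasurableEmbedding fun x : ℝ => -x :=
      (Homeomorph.neg ℝ).measurableEmbedding
    rw [m.integrableOn_map_iff]
    have : (phiR c ∘ fun x : ℝ => -x) = phiR c := by
      ext x; simp [phiR, Function.comp, abs_neg]
    rw [this]
    have : (fun x : ℝ => -x) ⁻¹' (Iic 0) = Ici 0 := by
      ext x; simp
    rw [this]
    exact (integrableOn_Ici_iff_integrableOn_Ioi).mpr hIoi
  have := hIic.union hIoi
  rwa [Iic_union_Ioi, integrableOn_univ] at this

lemma integral_phiR (c : ℝ) (hc : 0 < c) : ∫ x, phiR c x = 2 / c := by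
  unfold phiR
  rw [integral_comp_abs (f := fun y => Real.exp (-c * y))]
  have h := integral_comp_mul_left_Ioi (fun y => Real.exp (-y)) 0 hc
  simp only [mul_zero, smul_eq_mul] at h
  have h2 : ∫ x in Ioi (0:ℝ), Real.exp (-c * x) = c⁻¹ * ∫ x in Ioi (0:ℝ), Real.exp (-x) := by
    simpa [neg_mul] using h
  rw [h2, integral_exp_neg_Ioi_zero]
  field_simp

lemma continuous_negexp (c : ℝ) : Continuous (fun t : ℝ => -c * Real.exp (-c * t)) := by
  continuity

lemma ftc_psiR (c : ℝ) (x : ℝ) :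
    ∫ t in (0:ℝ)..x, psiR c t = Real.exp (-c * |x|) - 1 := by
  rcases le_or_gt x 0 with hx | hx
  · have hcong : ∫ t in (0:ℝ)..x, psiR c t = ∫ t in (0:ℝ)..x, c * Real.exp (c * t) := by
      refine intervalIntegral.integral_congr_ae (MeasureTheory.ae_of_all _ fun t ht => ?_)
      rw [Set.uIoc_comm, Set.uIoc_of_le hx] at ht
      have : ¬ (0 < t) := not_lt.mpr ht.2
      simp [psiR, this]
    rw [hcong]
    have hderiv : ∀ t ∈ Set.uIcc (0:ℝ) x,
        HasDerivAt (fun t => Real.exp (c * t)) (c * Real.exp (c * t)) t := by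
      intro t _
      simpa [mul_comm] using (((hasDerivAt_id t).const_mul c).exp)
    have hint : IntervalIntegrable (fun t => c * Real.exp (c * t)) volume 0 x :=
      (by continuity : Continuous fun t : ℝ => c * Real.exp (c * t)).intervalIntegrable 0 x
    rw [intervalIntegral.integral_eq_sub_of_hasDerivAt hderiv hint]
    rw [abs_of_nonpos hx]
    simp [Real.exp_zero]
  · have hcong : ∫ t in (0:ℝ)..x, psiR c t = ∫ t in (0:ℝ)..x, -c * Real.exp (-c * t) := by
      refine intervalIntegral.integral_congr_ae (MeasureTheory.ae_of_all _ fun t ht => ?_)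
      rw [Set.uIoc_of_le hx.le] at ht
      simp [psiR, ht.1]
    rw [hcong]
    have hderiv : ∀ t ∈ Set.uIcc (0:ℝ) x,
        HasDerivAt (fun t => Real.exp (-c * t)) (-c * Real.exp (-c * t)) t := by
      intro t _
      simpa [mul_comm] using (((hasDerivAt_id t).const_mul (-c)).exp)
    have hint : IntervalIntegrable (fun t => -c * Real.exp (-c * t)) volume 0 x :=
      (by continuity : Continuous fun t : ℝ => -c * Real.exp (-c * t)).intervalIntegrable 0 x
    rw [intervalIntegral.integral_eq_sub_of_hasDerivAt hderiv hint]
    rw [abs_of_pos hx]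
    simp [Real.exp_zero]

lemma continuous_phiR (c : ℝ) : Continuous (phiR c) := by
  unfold phiR; continuity

lemma measurable_psiR (c : ℝ) : Measurable (psiR c) := by
  unfold psiR
  exact Measurable.ite (measurableSet_lt measurable_const measurable_id)
    (by continuity : Continuous fun x : ℝ => -c * Real.exp (-c * x)).measurable
    (by continuity : Continuous fun x : ℝ => c * Real.exp (c * x)).measurable

lemma norm_sq_phiC (c x : ℝ) : ‖((phiR c x : ℝ) : ℂ)‖ ^ 2 = phiR (2 * c) x := by
  rw [Complex.norm_real, Real.norm_eq_abs, _root_.abs_of_pos (phiR_pos c x)]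
  unfold phiR
  rw [pow_two, ← Real.exp_add]
  ring_nf

lemma norm_sq_psiC (c x : ℝ) (hc : 0 < c) :
    ‖((psiR c x : ℝ) : ℂ)‖ ^ 2 = c ^ 2 * phiR (2 * c) x := by
  rw [Complex.norm_real, Real.norm_eq_abs, abs_psiR c x hc]
  unfold phiR
  rw [mul_pow, pow_two (Real.exp _), ← Real.exp_add]
  ring_nf

lemma memLp_phiC (c : ℝ) (hc : 0 < c) :
    MemLp (fun x => ((phiR c x : ℝ) : ℂ)) 2 volume := by
  have hm : AEStronglyMeasurable (fun x => ((phiR c x : ℝ) : ℂ)) volume :=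
    (Complex.continuous_ofReal.comp (continuous_phiR c)).aestronglyMeasurable
  rw [memLp_two_iff_integrable_sq_norm hm]
  have heq : (fun x => ‖((phiR c x : ℝ) : ℂ)‖ ^ 2) = phiR (2 * c) := by
    funext x; exact norm_sq_phiC c x
  rw [heq]
  exact integrable_phiR (2 * c) (by linarith)

lemma memLp_psiC (c : ℝ) (hc : 0 < c) :
    MemLp (fun x => ((psiR c x : ℝ) : ℂ)) 2 volume := by
  have hm : AEStronglyMeasurable (fun x => ((psiR c x : ℝ) : ℂ)) volume :=
    (Complex.measurable_ofReal.comp (measurable_psiR c)).aestronglyMeasurable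
  rw [memLp_two_iff_integrable_sq_norm hm]
  have heq : (fun x => ‖((psiR c x : ℝ) : ℂ)‖ ^ 2) = fun x => c ^ 2 * phiR (2 * c) x := by
    funext x; exact norm_sq_psiC c x hc
  rw [heq]
  exact (integrable_phiR (2 * c) (by linarith)).const_mul _

lemma int_norm_sq_phiC (c : ℝ) (hc : 0 < c) :
    ∫ x : ℝ, ‖((phiR c x : ℝ) : ℂ)‖ ^ 2 = 1 / c := by
  have heq : (fun x => ‖((phiR c x : ℝ) : ℂ)‖ ^ 2) = phiR (2 * c) := by
    funext x; exact norm_sq_phiC c x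
  rw [heq, integral_phiR (2 * c) (by linarith)]
  field_simp

lemma int_main_phiC (c : ℝ) (hc : 0 < c) :
    ∫ x : ℝ, (‖((psiR c x : ℝ) : ℂ)‖ ^ 2 + c ^ 2 * ‖((phiR c x : ℝ) : ℂ)‖ ^ 2) = 2 * c := by
  have heq : (fun x => ‖((psiR c x : ℝ) : ℂ)‖ ^ 2 + c ^ 2 * ‖((phiR c x : ℝ) : ℂ)‖ ^ 2)
      = fun x => (2 * c ^ 2) * phiR (2 * c) x := by
    funext x
    rw [norm_sq_psiC c x hc, norm_sq_phiC c x]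
    ring
  rw [heq, integral_const_mul, integral_phiR (2 * c) (by linarith)]
  field_simp

lemma sum_upper (M : ℝ) (hM : 0 ≤ M) (N : ℕ) :
    ∑ k ∈ Finset.Icc 1 N, (2 * (k : ℝ) + M / (k : ℝ)) ≤ (N : ℝ) ^ 2 + N + M * N := by
  induction N with
  | zero => simp
  | succ n ih =>
    rw [Finset.sum_Icc_succ_top (by omega : 1 ≤ n + 1)]
    have h1 : (1 : ℝ) ≤ ((n : ℝ) + 1) := by have := Nat.cast_nonneg (α := ℝ) n; linarith
    have h2 : M / ((n : ℝ) + 1) ≤ M := div_le_self hM h1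
    push_cast at *
    nlinarith

lemma cross_eval (N : ℕ) (hN : 1 ≤ N) :
    ∑ k ∈ Finset.Icc 2 N, (2 * (k : ℝ) - 1) = (N : ℝ) ^ 2 - 1 := by
  induction N, hN using Nat.le_induction with
  | base => rw [Finset.Icc_eq_empty (by omega)]; simp
  | succ n hn ih =>
    rw [Finset.sum_Icc_succ_top (by omega : 2 ≤ n + 1), ih]
    push_cast
    ring


/-- Remark 4.3: for `α > 1` the quadratic form `𝐥_α[U] = 𝐥₀[U] - α 𝐛[U]` is unbounded
from below: for every `M > 0` there is a finitely supported family `u : ℤ → H¹(ℝ)` with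
`∑ ∫ (|u_n'|² + n²|u_n|²) - α ∑ (2n-1) Re(u_n(0) conj(u_{n-1}(0))) + M ∑ ∫ |u_n|² < 0`. -/
theorem form_unbounded_below (α : ℝ) (hα : 1 < α) (M : ℝ) (hM : 0 < M) :
    ∃ u u' : ℤ → ℝ → ℂ,
      (∀ n : ℤ, MemH1 (u n) (u' n)) ∧
      (∃ S : Finset ℤ, ∀ n : ℤ, n ∉ S → u n = 0 ∧ u' n = 0) ∧
      (∑' n : ℤ, ∫ x : ℝ, (‖u' n x‖ ^ 2 + (n : ℝ) ^ 2 * ‖u n x‖ ^ 2))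
        - α * (∑' n : ℤ, (2 * (n : ℝ) - 1) * (u n 0 * (starRingEnd ℂ) (u (n - 1) 0)).re)
        + M * (∑' n : ℤ, ∫ x : ℝ, ‖u n x‖ ^ 2) < 0 := by
  classical
  set N : ℕ := ⌈(1 + M + α) / (α - 1)⌉₊ + 1 with hNdef
  have hN1 : 1 ≤ N := by omega
  have hNR1 : (1 : ℝ) ≤ (N : ℝ) := by exact_mod_cast hN1
  have hεpos : (0 : ℝ) < α - 1 := by linarith
  have hkey : (1 + M) * (N : ℝ) + α < (α - 1) * (N : ℝ) ^ 2 := by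
    have h1 : (1 + M + α) / (α - 1) < (N : ℝ) := by
      calc (1 + M + α) / (α - 1) ≤ (⌈(1 + M + α) / (α - 1)⌉₊ : ℝ) := Nat.le_ceil _
        _ < (N : ℝ) := by rw [hNdef]; push_cast; linarith
    have h2 : 1 + M + α < (N : ℝ) * (α - 1) := (div_lt_iff₀ hεpos).mp h1
    nlinarith
  refine ⟨fun n => if 1 ≤ n ∧ n ≤ (N : ℤ) then (fun x => ((phiR (n : ℝ) x : ℝ) : ℂ)) else 0,
    fun n => if 1 ≤ n ∧ n ≤ (N : ℤ) then (fun x => ((psiR (n : ℝ) x : ℝ) : ℂ)) else 0,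
    ?_, ⟨Finset.Icc (1 : ℤ) (N : ℤ), ?_⟩, ?_⟩
  · intro n
    by_cases h : 1 ≤ n ∧ n ≤ (N : ℤ)
    · simp only [if_pos h]
      have hc : (0 : ℝ) < (n : ℝ) := by
        have : (1 : ℤ) ≤ n := h.1
        exact_mod_cast lt_of_lt_of_le zero_lt_one (by exact_mod_cast this : (1:ℝ) ≤ (n:ℝ))
      refine ⟨memLp_phiC _ hc, memLp_psiC _ hc, fun x => ?_⟩
      rw [intervalIntegral.integral_ofReal, ftc_psiR]
      simp only [phiR]
      push_cast
      simp
    · simp only [if_neg h]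
      exact ⟨MemLp.zero, MemLp.zero, fun x => by simp⟩
  · intro n hn
    rw [Finset.mem_Icc] at hn
    exact ⟨if_neg hn, if_neg hn⟩
  · have hmap1 : Finset.Icc (1 : ℤ) (N : ℤ)
        = Finset.map Nat.castEmbedding (Finset.Icc 1 N) := by
      ext n
      simp only [Finset.mem_Icc, Finset.mem_map, Nat.castEmbedding_apply]
      constructor
      · rintro ⟨h1, h2⟩
        exact ⟨n.toNat, by omega, by omega⟩
      · rintro ⟨k, hk, rfl⟩
        omega
    have hmap2 : Finset.Icc (2 : ℤ) (N : ℤ)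
        = Finset.map Nat.castEmbedding (Finset.Icc 2 N) := by
      ext n
      simp only [Finset.mem_Icc, Finset.mem_map, Nat.castEmbedding_apply]
      constructor
      · rintro ⟨h1, h2⟩
        exact ⟨n.toNat, by omega, by omega⟩
      · rintro ⟨k, hk, rfl⟩
        omega
    have ht1 : (∑' n : ℤ, ∫ x : ℝ,
        (‖(if 1 ≤ n ∧ n ≤ (N : ℤ) then (fun x => ((psiR (n : ℝ) x : ℝ) : ℂ)) else 0) x‖ ^ 2
          + (n : ℝ) ^ 2 *
            ‖(if 1 ≤ n ∧ n ≤ (N : ℤ) then (fun x => ((phiR (n : ℝ) x : ℝ) : ℂ)) else 0) x‖ ^ 2))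
        = ∑ k ∈ Finset.Icc 1 N, 2 * (k : ℝ) := by
      rw [tsum_eq_sum (s := Finset.Icc (1 : ℤ) (N : ℤ)) ?van]
      case van =>
        intro n hn
        rw [Finset.mem_Icc] at hn
        simp [if_neg hn]
      rw [hmap1, Finset.sum_map]
      refine Finset.sum_congr rfl fun k hk => ?_
      rw [Finset.mem_Icc] at hk
      have hcond : 1 ≤ ((k : ℤ)) ∧ (k : ℤ) ≤ (N : ℤ) := by omega
      have hc : (0 : ℝ) < (((k : ℤ)) : ℝ) := by push_cast; exact_mod_cast hk.1
      simp only [Nat.castEmbedding_apply, if_pos hcond]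
      rw [int_main_phiC _ hc]
      push_cast
      ring
    have ht3 : (∑' n : ℤ, ∫ x : ℝ,
        ‖(if 1 ≤ n ∧ n ≤ (N : ℤ) then (fun x => ((phiR (n : ℝ) x : ℝ) : ℂ)) else 0) x‖ ^ 2)
        = ∑ k ∈ Finset.Icc 1 N, 1 / (k : ℝ) := by
      rw [tsum_eq_sum (s := Finset.Icc (1 : ℤ) (N : ℤ)) ?van3]
      case van3 =>
        intro n hn
        rw [Finset.mem_Icc] at hn
        simp [if_neg hn]
      rw [hmap1, Finset.sum_map]
      refine Finset.sum_congr rfl fun k hk => ?_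
      rw [Finset.mem_Icc] at hk
      have hcond : 1 ≤ ((k : ℤ)) ∧ (k : ℤ) ≤ (N : ℤ) := by omega
      have hc : (0 : ℝ) < (((k : ℤ)) : ℝ) := by push_cast; exact_mod_cast hk.1
      simp only [Nat.castEmbedding_apply, if_pos hcond]
      rw [int_norm_sq_phiC _ hc]
      push_cast
      ring
    have ht2 : (∑' n : ℤ, (2 * (n : ℝ) - 1) *
        (((if 1 ≤ n ∧ n ≤ (N : ℤ) then (fun x => ((phiR (n : ℝ) x : ℝ) : ℂ)) else 0) 0)
          * (starRingEnd ℂ)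
            ((if 1 ≤ n - 1 ∧ n - 1 ≤ (N : ℤ) then (fun x => ((phiR ((n - 1 : ℤ) : ℝ) x : ℝ) : ℂ)) else 0) 0)).re)
        = (N : ℝ) ^ 2 - 1 := by
      rw [tsum_eq_sum (s := Finset.Icc (2 : ℤ) (N : ℤ)) ?van2]
      case van2 =>
        intro n hn
        rw [Finset.mem_Icc] at hn
        by_cases h : 1 ≤ n ∧ n ≤ (N : ℤ)
        · have hn1 : ¬ (1 ≤ n - 1 ∧ n ≤ (N : ℤ) + 1) := by omega
          simp [if_neg hn1, show ¬ (1 < n ∧ n ≤ (N : ℤ) + 1) by omega]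
        · simp [if_neg h]
      rw [hmap2, Finset.sum_map, ← cross_eval N hN1]
      refine Finset.sum_congr rfl fun k hk => ?_
      rw [Finset.mem_Icc] at hk
      have hcond : 1 ≤ ((k : ℤ)) ∧ (k : ℤ) ≤ (N : ℤ) := by omega
      have hcond' : 1 ≤ ((k : ℤ)) - 1 ∧ (k : ℤ) - 1 ≤ (N : ℤ) := by omega
      simp only [Nat.castEmbedding_apply, if_pos hcond, if_pos hcond']
      have h0 : ∀ c : ℝ, phiR c 0 = 1 := fun c => by simp [phiR]
      rw [h0, h0]
      push_cast
      simp
    rw [ht1, ht2, ht3]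
    have hcomb : (∑ k ∈ Finset.Icc 1 N, 2 * (k : ℝ))
        + M * (∑ k ∈ Finset.Icc 1 N, 1 / (k : ℝ))
        = ∑ k ∈ Finset.Icc 1 N, (2 * (k : ℝ) + M / (k : ℝ)) := by
      rw [Finset.mul_sum, ← Finset.sum_add_distrib]
      refine Finset.sum_congr rfl fun k _ => ?_
      ring
    have hupper := sum_upper M hM.le N
    have := hcomb ▸ hupper
    nlinarith [this, hkey]
end

section
/- Let u : {1, 2, 3, …} → H¹(ℝ) be a family of functions with M := ∑_{n≥1} ∫_ℝ ( |u_n′(x)|² + n² |u_n(x)|² ) dx < ∞. Then the series ∑_{n≥2} (2n−1) · Im( u_n(0) · conj(u_{n−1}(0)) ) converges absolutely and | ∑_{n≥2} (2n−1) · Im( u_n(0) · conj(u_{n−1}(0)) ) | ≤ M. -/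
open Complex MeasureTheory

section Aux
open Set Filter

lemma integrable_conj' {μ : Measure ℝ} {h : ℝ → ℂ} (hi : Integrable h μ) :
    Integrable (fun s => (starRingEnd ℂ) (h s)) μ := by
  refine hi.norm.mono' (Complex.continuous_conj.comp_aestronglyMeasurable hi.aestronglyMeasurable) ?_
  exact Eventually.of_forall fun s => by simp

lemma sq_primitive (h : ℝ → ℂ) (x : ℝ) (hi : IntegrableOn h (Ioc 0 x))
    (hH : AEStronglyMeasurable (fun s => ∫ u in Ioc (0:ℝ) s, h u) (volume.restrict (Ioc 0 x))) :
    ‖∫ s in Ioc (0:ℝ) x, h s‖ ^ 2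
      = 2 * (∫ t in Ioc (0:ℝ) x, (starRingEnd ℂ) (∫ s in Ioc (0:ℝ) t, h s) * h t).re := by
  set A : Set ℝ := Ioc 0 x with hA
  set H : ℝ → ℂ := fun s => ∫ u in Ioc (0:ℝ) s, h u with hHdef
  set μA := volume.restrict A with hmuA
  set I₁ : ℂ := ∫ t in A, (starRingEnd ℂ) (H t) * h t with hI1
  set F : ℝ × ℝ → ℂ := ({p : ℝ × ℝ | p.1 ≤ p.2}).indicator
      (fun p => (starRingEnd ℂ) (h p.1) * h p.2) with hF
  have hconj : IntegrableOn (fun s => (starRingEnd ℂ) (h s)) A := integrable_conj' hi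
  have hFint : Integrable F (μA.prod μA) := by
    refine (Integrable.mul_prod hconj hi).indicator ?_
    exact measurableSet_le measurable_fst measurable_snd
  have hHbound : ∀ᵐ s ∂μA, ‖H s‖ ≤ ∫ u in A, ‖h u‖ := by
    rw [hmuA, ae_restrict_iff' measurableSet_Ioc]
    refine Eventually.of_forall fun s hs => ?_
    calc ‖H s‖ ≤ ∫ u in Ioc (0:ℝ) s, ‖h u‖ := norm_integral_le_integral_norm _
    _ ≤ ∫ u in A, ‖h u‖ :=
        setIntegral_mono_set hi.norm (Eventually.of_forall fun u => norm_nonneg _)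
          (HasSubset.Subset.eventuallyLE (Ioc_subset_Ioc le_rfl hs.2))
  have hHconjint : Integrable (fun s => H s * (starRingEnd ℂ) (h s)) μA :=
    Integrable.bdd_mul hconj hH hHbound
  have hI1int : Integrable (fun t => (starRingEnd ℂ) (H t) * h t) μA :=
    Integrable.bdd_mul hi (Complex.continuous_conj.comp_aestronglyMeasurable hH)
      (by filter_upwards [hHbound] with s hs using by simpa using hs)
  -- iterated integral, s inner
  have iter2 : ∫ z, F z ∂(μA.prod μA) = I₁ := by
    rw [integral_prod_symm F hFint, hI1]
    refine setIntegral_congr_fun measurableSet_Ioc fun t ht => ?_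
    have : ∀ s : ℝ, F (s, t) = (Iic t).indicator (fun s => (starRingEnd ℂ) (h s) * h t) s := by
      intro s
      by_cases hst : s ≤ t <;> simp [hF, Set.indicator, hst]
    simp_rw [this]
    rw [setIntegral_indicator measurableSet_Iic]
    have hAt : A ∩ Iic t = Ioc 0 t := by
      rw [hA]; ext s; simp only [mem_inter_iff, mem_Ioc, mem_Iic]
      constructor
      · rintro ⟨⟨h1, _⟩, h3⟩; exact ⟨h1, h3⟩
      · rintro ⟨h1, h3⟩; exact ⟨⟨h1, h3.trans ht.2⟩, h3⟩
    rw [hAt, integral_mul_const, integral_conj]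
  -- iterated integral, t inner
  have iter1 : ∫ z, F z ∂(μA.prod μA)
      = (starRingEnd ℂ) (H x) * H x - (starRingEnd ℂ) I₁ := by
    rw [integral_prod F hFint]
    have step : ∀ s ∈ A, (∫ t, F (s, t) ∂μA) = (starRingEnd ℂ) (h s) * (H x - H s) := by
      intro s hs
      have : ∀ t : ℝ, F (s, t) = (Ici s).indicator (fun t => (starRingEnd ℂ) (h s) * h t) t := by
        intro t
        by_cases hst : s ≤ t <;> simp [hF, Set.indicator, hst]
      simp_rw [this]
      rw [hmuA, setIntegral_indicator measurableSet_Ici]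
      have hAs : A ∩ Ici s = Icc s x := by
        rw [hA]; ext t; simp only [mem_inter_iff, mem_Ioc, mem_Icc, mem_Ici]
        constructor
        · rintro ⟨⟨_, h2⟩, h3⟩; exact ⟨h3, h2⟩
        · rintro ⟨h1, h2⟩; exact ⟨⟨lt_of_lt_of_le hs.1 h1, h2⟩, h1⟩
      rw [hAs, integral_Icc_eq_integral_Ioc, integral_const_mul]
      congr 1
      have hsplit : Ioc (0:ℝ) s ∪ Ioc s x = Ioc 0 x := Ioc_union_Ioc_eq_Ioc (le_of_lt hs.1) hs.2
      have key := setIntegral_union (Ioc_disjoint_Ioc_of_le le_rfl) measurableSet_Ioc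
        (hi.mono_set (Ioc_subset_Ioc le_rfl hs.2))
        (hi.mono_set (Ioc_subset_Ioc (le_of_lt hs.1) le_rfl)) (f := h) (μ := volume)
      rw [hsplit] at key
      show (∫ u in Ioc s x, h u) = H x - H s
      rw [eq_sub_iff_add_eq, add_comm]
      exact key.symm
    rw [hmuA]
    rw [setIntegral_congr_fun measurableSet_Ioc step]
    have expand : ∀ s ∈ A, (starRingEnd ℂ) (h s) * (H x - H s)
        = (starRingEnd ℂ) (h s) * H x - H s * (starRingEnd ℂ) (h s) := by
      intro s _; ring
    rw [setIntegral_congr_fun measurableSet_Ioc expand]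
    rw [integral_sub (hconj.mul_const _) (by rw [hmuA] at hHconjint; exact hHconjint)]
    congr 1
    · rw [integral_mul_const, integral_conj]
    · rw [hI1, ← integral_conj]
      refine setIntegral_congr_fun measurableSet_Ioc fun s _ => ?_
      simp [mul_comm]
  have key : I₁ = (starRingEnd ℂ) (H x) * H x - (starRingEnd ℂ) I₁ := by
    rw [← iter1, iter2]
  rw [eq_sub_iff_add_eq] at key
  have hre := congrArg Complex.re key
  simp only [Complex.add_re, Complex.conj_re] at hre
  have hnorm : ((starRingEnd ℂ) (H x) * H x).re = ‖H x‖ ^ 2 := by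
    rw [mul_comm, Complex.mul_conj, Complex.ofReal_re, Complex.normSq_eq_norm_sq]
  rw [hnorm] at hre
  show ‖H x‖ ^ 2 = 2 * I₁.re
  rw [← hre]; ring


lemma conjH_mul_integrable (h : ℝ → ℂ) (x : ℝ) (hi : IntegrableOn h (Ioc 0 x))
    (hH : AEStronglyMeasurable (fun s => ∫ u in Ioc (0:ℝ) s, h u) (volume.restrict (Ioc 0 x))) :
    IntegrableOn (fun t => (starRingEnd ℂ) (∫ s in Ioc (0:ℝ) t, h s) * h t) (Ioc 0 x) := by
  have hHbound : ∀ᵐ s ∂(volume.restrict (Ioc (0:ℝ) x)),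
      ‖∫ u in Ioc (0:ℝ) s, h u‖ ≤ ∫ u in Ioc (0:ℝ) x, ‖h u‖ := by
    rw [ae_restrict_iff' measurableSet_Ioc]
    refine Eventually.of_forall fun s hs => ?_
    calc ‖∫ u in Ioc (0:ℝ) s, h u‖ ≤ ∫ u in Ioc (0:ℝ) s, ‖h u‖ := norm_integral_le_integral_norm _
    _ ≤ ∫ u in Ioc (0:ℝ) x, ‖h u‖ :=
        setIntegral_mono_set hi.norm (Eventually.of_forall fun u => norm_nonneg _)
          (HasSubset.Subset.eventuallyLE (Ioc_subset_Ioc le_rfl hs.2))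
  exact Integrable.bdd_mul hi (Complex.continuous_conj.comp_aestronglyMeasurable hH)
    (by filter_upwards [hHbound] with s hs using by simpa using hs)

lemma sq_primitive' (h : ℝ → ℂ) (x : ℝ) (hi : IntegrableOn h (Ioc 0 x))
    (hH : AEStronglyMeasurable (fun s => ∫ u in Ioc (0:ℝ) s, h u) (volume.restrict (Ioc 0 x))) :
    ‖∫ s in Ioc (0:ℝ) x, h s‖ ^ 2
      = ∫ t in Ioc (0:ℝ) x, 2 * ((starRingEnd ℂ) (∫ s in Ioc (0:ℝ) t, h s) * h t).re := by
  have hre := integral_re (conjH_mul_integrable h x hi hH)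
  simp only [RCLike.re_to_complex] at hre
  rw [sq_primitive h x hi hH, ← hre, ← integral_const_mul]

lemma norm_add_sq_re (a b : ℂ) : ‖a + b‖ ^ 2 = ‖a‖ ^ 2 + 2 * ((starRingEnd ℂ) a * b).re + ‖b‖ ^ 2 := by
  have : ∀ z : ℂ, ‖z‖ ^ 2 = Complex.normSq z := fun z => by
    rw [Complex.sq_norm]
  rw [this, this, this]
  simp [Complex.normSq_apply, Complex.mul_re]
  ring


lemma integrable_norm_mul {f g : ℝ → ℂ} (hf : MemLp f 2 volume) (hg : MemLp g 2 volume) :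
    Integrable (fun t => ‖f t‖ * ‖g t‖) volume := by
  have h1 := hf.norm.integrable_sq
  have h2 := hg.norm.integrable_sq
  refine ((h1.add h2).const_mul (1/2)).mono'
    (hf.aestronglyMeasurable.norm.mul hg.aestronglyMeasurable.norm) ?_
  refine Eventually.of_forall fun t => ?_
  have h3 : ‖f t‖ * ‖g t‖ ≥ 0 := mul_nonneg (norm_nonneg _) (norm_nonneg _)
  rw [Real.norm_eq_abs, _root_.abs_of_nonneg h3]
  simp only [Pi.add_apply]
  nlinarith [sq_nonneg (‖f t‖ - ‖g t‖)]

lemma memH1_identity {f f' : ℝ → ℂ} (hf : MemH1 f f') {x : ℝ} (hx : 0 ≤ x) :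
    ‖f x‖ ^ 2 = ‖f 0‖ ^ 2 + ∫ t in Ioc (0:ℝ) x, 2 * ((starRingEnd ℂ) (f t) * f' t).re := by
  obtain ⟨hf2, hf'2, hrep⟩ := hf
  have hii : ∀ a b : ℝ, IntervalIntegrable f' volume a b := by
    intro a b
    constructor <;> exact (hf'2.restrict _).integrable one_le_two
  have hi : IntegrableOn f' (Ioc 0 x) := (hf'2.restrict _).integrable one_le_two
  have hH : AEStronglyMeasurable (fun s => ∫ u in Ioc (0:ℝ) s, f' u)
      (volume.restrict (Ioc 0 x)) := by
    have hco := intervalIntegral.continuousOn_primitive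
      (f := f') (a := 0) (b := x) (μ := volume) ((hf'2.restrict _).integrable one_le_two)
    exact (hco.aestronglyMeasurable measurableSet_Icc).mono_measure
      (Measure.restrict_mono Ioc_subset_Icc_self le_rfl)
  have hrep' : ∀ t : ℝ, 0 ≤ t → f t = f 0 + ∫ u in Ioc (0:ℝ) t, f' u := fun t ht => by
    rw [hrep t, intervalIntegral.integral_of_le ht]
  -- expand the integrand on Ioc 0 x
  have hsplit : ∀ t ∈ Ioc (0:ℝ) x,
      2 * ((starRingEnd ℂ) (f t) * f' t).re
        = 2 * ((starRingEnd ℂ) (f 0) * f' t).re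
          + 2 * ((starRingEnd ℂ) (∫ u in Ioc (0:ℝ) t, f' u) * f' t).re := by
    intro t ht
    rw [hrep' t (le_of_lt ht.1)]
    simp [map_add, add_mul, Complex.add_re]
    ring
  rw [setIntegral_congr_fun measurableSet_Ioc hsplit]
  have i1 : IntegrableOn (fun t => 2 * ((starRingEnd ℂ) (f 0) * f' t).re) (Ioc 0 x) := by
    exact ((hi.const_mul ((starRingEnd ℂ) (f 0))).re.const_mul 2)
  have i2 : IntegrableOn (fun t =>
      2 * ((starRingEnd ℂ) (∫ u in Ioc (0:ℝ) t, f' u) * f' t).re) (Ioc 0 x) :=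
    ((conjH_mul_integrable f' x hi hH).re.const_mul 2)
  rw [integral_add i1 i2]
  rw [← sq_primitive' f' x hi hH]
  have e1 : ∫ t in Ioc (0:ℝ) x, 2 * ((starRingEnd ℂ) (f 0) * f' t).re
      = 2 * ((starRingEnd ℂ) (f 0) * ∫ u in Ioc (0:ℝ) x, f' u).re := by
    have hre := integral_re (hi.const_mul ((starRingEnd ℂ) (f 0)))
    simp only [RCLike.re_to_complex] at hre
    rw [integral_const_mul, hre, integral_const_mul]
  rw [e1, hrep' x hx, norm_add_sq_re]
  ring

lemma half_bound {f f' : ℝ → ℂ} (hf : MemH1 f f') :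
    ‖f 0‖ ^ 2 ≤ ∫ t in Ioi (0:ℝ), 2 * (‖f t‖ * ‖f' t‖) := by
  obtain ⟨hf2, hf'2, hrep⟩ := hf
  have hmul : Integrable (fun t => ‖f t‖ * ‖f' t‖) volume := integrable_norm_mul hf2 hf'2
  set φ : ℝ → ℝ := fun t => 2 * ((starRingEnd ℂ) (f t) * f' t).re with hφdef
  have m1 : AEStronglyMeasurable (fun t => (starRingEnd ℂ) (f t) * f' t) volume :=
    (Complex.continuous_conj.comp_aestronglyMeasurable hf2.aestronglyMeasurable).mul
      hf'2.aestronglyMeasurable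
  have hφm : AEStronglyMeasurable φ volume :=
    (Complex.continuous_re.comp_aestronglyMeasurable m1).const_mul 2
  have hφbound : ∀ t, |φ t| ≤ 2 * (‖f t‖ * ‖f' t‖) := by
    intro t
    rw [hφdef, abs_mul, show |(2:ℝ)| = 2 by norm_num]
    have h1 : |((starRingEnd ℂ) (f t) * f' t).re| ≤ ‖(starRingEnd ℂ) (f t) * f' t‖ :=
      Complex.abs_re_le_norm _
    have h2 : ‖(starRingEnd ℂ) (f t) * f' t‖ = ‖f t‖ * ‖f' t‖ := by
      rw [norm_mul]; simp
    nlinarith [abs_nonneg (((starRingEnd ℂ) (f t) * f' t).re)]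
  have hφint : Integrable φ volume := by
    refine (hmul.const_mul 2).mono' hφm (Eventually.of_forall fun t => ?_)
    rw [Real.norm_eq_abs]; exact hφbound t
  -- identity
  have hid : ∀ x : ℝ, 0 ≤ x → ‖f x‖ ^ 2 = ‖f 0‖ ^ 2 + ∫ t in Ioc (0:ℝ) x, φ t :=
    fun x hx => memH1_identity ⟨hf2, hf'2, hrep⟩ hx
  set L : ℝ := ‖f 0‖ ^ 2 + ∫ t in Ioi (0:ℝ), φ t with hLdef
  have T1 : Tendsto (fun x => ∫ t in (0:ℝ)..x, φ t) atTop (nhds (∫ t in Ioi (0:ℝ), φ t)) :=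
    intervalIntegral_tendsto_integral_Ioi 0 hφint.integrableOn tendsto_id
  have T : Tendsto (fun x => ‖f x‖ ^ 2) atTop (nhds L) := by
    refine ((tendsto_const_nhds.add T1).congr' ?_)
    filter_upwards [eventually_ge_atTop (0:ℝ)] with x hx
    rw [hid x hx, intervalIntegral.integral_of_le hx]
  have hL : L ≤ 0 := by
    by_contra hpos
    push_neg at hpos
    have hev := T.eventually_const_le (show L/2 < L by linarith)
    obtain ⟨A, hA⟩ := eventually_atTop.1 hev
    have gint : IntegrableOn (fun x => ‖f x‖ ^ 2) (Ioi A) volume :=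
      (hf2.norm.integrable_sq).integrableOn
    have cint : Integrable (fun _ : ℝ => L/2) (volume.restrict (Ioi A)) := by
      refine gint.mono' aestronglyMeasurable_const ?_
      rw [ae_restrict_iff' measurableSet_Ioi]
      refine Eventually.of_forall fun x hx => ?_
      rw [Real.norm_eq_abs, _root_.abs_of_nonneg (by linarith : (0:ℝ) ≤ L/2)]
      exact hA x (le_of_lt hx)
    rcases integrable_const_iff.1 cint with h | h
    · linarith
    · replace h := h.measure_univ_lt_top; rw [Measure.restrict_apply_univ, Real.volume_Ioi] at h
      exact (lt_irrefl _ h).elim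
  have step1 : ‖f 0‖ ^ 2 ≤ - ∫ t in Ioi (0:ℝ), φ t := by
    rw [hLdef] at hL; linarith
  have step2 : - ∫ t in Ioi (0:ℝ), φ t ≤ ∫ t in Ioi (0:ℝ), |φ t| := by
    have := norm_integral_le_integral_norm (μ := volume.restrict (Ioi (0:ℝ))) φ
    simp only [Real.norm_eq_abs] at this
    have h2 := neg_abs_le (∫ t in Ioi (0:ℝ), φ t)
    linarith
  have step3 : ∫ t in Ioi (0:ℝ), |φ t| ≤ ∫ t in Ioi (0:ℝ), 2 * (‖f t‖ * ‖f' t‖) := by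
    refine integral_mono hφint.abs.integrableOn ((hmul.const_mul 2).integrableOn) ?_
    exact fun t => hφbound t
  linarith

lemma MemH1.reflect {f f' : ℝ → ℂ} (hf : MemH1 f f') :
    MemH1 (fun x => f (-x)) (fun x => -f' (-x)) := by
  obtain ⟨hf2, hf'2, hrep⟩ := hf
  refine ⟨hf2.comp_measurePreserving (Measure.measurePreserving_neg volume),
    (hf'2.comp_measurePreserving (Measure.measurePreserving_neg volume)).neg, fun x => ?_⟩
  simp only [neg_zero]
  rw [hrep (-x)]
  congr 1
  rw [intervalIntegral.integral_neg, intervalIntegral.integral_comp_neg (fun t => f' t),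
    intervalIntegral.integral_symm]
  simp

lemma trace_ineq {f f' : ℝ → ℂ} (hf : MemH1 f f') {c : ℝ} (hc : 0 ≤ c) :
    2 * c * ‖f 0‖ ^ 2 ≤ ∫ x : ℝ, (‖f' x‖ ^ 2 + c ^ 2 * ‖f x‖ ^ 2) := by
  have hf2 := hf.1
  have hf'2 := hf.2.1
  have hmul : Integrable (fun t => ‖f t‖ * ‖f' t‖) volume := integrable_norm_mul hf2 hf'2
  have hR := half_bound hf
  have hL' := half_bound hf.reflect
  have hL : ‖f 0‖ ^ 2 ≤ ∫ t in Iic (0:ℝ), 2 * (‖f t‖ * ‖f' t‖) := by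
    simp only [norm_neg, neg_zero] at hL'
    rwa [integral_comp_neg_Ioi (0:ℝ) (fun t => 2 * (‖f t‖ * ‖f' t‖)), neg_zero] at hL'
  have hsum : 2 * ‖f 0‖ ^ 2 ≤ ∫ t : ℝ, 2 * (‖f t‖ * ‖f' t‖) := by
    have := intervalIntegral.integral_Iic_add_Ioi (μ := volume) (b := (0:ℝ))
      (f := fun t => 2 * (‖f t‖ * ‖f' t‖)) ((hmul.const_mul 2).integrableOn)
      ((hmul.const_mul 2).integrableOn)
    linarith
  have hrhs : Integrable (fun x => ‖f' x‖ ^ 2 + c ^ 2 * ‖f x‖ ^ 2) volume :=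
    (hf'2.norm.integrable_sq).add ((hf2.norm.integrable_sq).const_mul (c ^ 2))
  have hstep : c * ∫ t : ℝ, 2 * (‖f t‖ * ‖f' t‖) ≤ ∫ x : ℝ, (‖f' x‖ ^ 2 + c ^ 2 * ‖f x‖ ^ 2) := by
    rw [← integral_const_mul]
    refine integral_mono ((hmul.const_mul 2).const_mul c) hrhs fun t => ?_
    simp only
    nlinarith [sq_nonneg (‖f' t‖ - c * ‖f t‖), mul_nonneg (norm_nonneg (f t)) (norm_nonneg (f' t))]
  calc 2 * c * ‖f 0‖ ^ 2 = c * (2 * ‖f 0‖ ^ 2) := by ring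
  _ ≤ c * ∫ t : ℝ, 2 * (‖f t‖ * ‖f' t‖) := by
      exact mul_le_mul_of_nonneg_left hsum hc
  _ ≤ _ := hstep



end Aux

/-- Inequality (2A.3a): for a family `u : {1,2,3,…} → H¹(ℝ)` with
`M = ∑_{n≥1} ∫ (|u_n'|² + n²|u_n|²) < ∞`, the series
`∑_{n≥2} (2n-1) Im(u_n(0) conj(u_{n-1}(0)))` converges absolutely and is bounded
in modulus by `M`.  (Here the index `n ≥ 1` is encoded as `n + 1`, `n : ℕ`.) -/
theorem strip_form_bound (u u' : ℕ → ℝ → ℂ)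
    (hH1 : ∀ n : ℕ, 1 ≤ n → MemH1 (u n) (u' n))
    (hsum : Summable fun n : ℕ =>
      ∫ x : ℝ, (‖u' (n + 1) x‖ ^ 2 + ((n : ℝ) + 1) ^ 2 * ‖u (n + 1) x‖ ^ 2)) :
    (Summable fun n : ℕ =>
        |(2 * ((n : ℝ) + 2) - 1) * (u (n + 2) 0 * (starRingEnd ℂ) (u (n + 1) 0)).im|) ∧
      |∑' n : ℕ, (2 * ((n : ℝ) + 2) - 1) * (u (n + 2) 0 * (starRingEnd ℂ) (u (n + 1) 0)).im|
        ≤ ∑' n : ℕ, ∫ x : ℝ, (‖u' (n + 1) x‖ ^ 2 + ((n : ℝ) + 1) ^ 2 * ‖u (n + 1) x‖ ^ 2) := by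
  set I : ℕ → ℝ := fun n => ∫ x : ℝ, (‖u' (n + 1) x‖ ^ 2 + ((n : ℝ) + 1) ^ 2 * ‖u (n + 1) x‖ ^ 2)
    with hIdef
  set B : ℕ → ℝ := fun k => ‖u (k + 1) 0‖ ^ 2 with hBdef
  have hB0 : ∀ k, 0 ≤ B k := fun k => sq_nonneg _
  have htrace : ∀ k : ℕ, 2 * ((k : ℝ) + 1) * B k ≤ I k := by
    intro k
    have := trace_ineq (hH1 (k + 1) (by omega)) (c := (k : ℝ) + 1) (by positivity)
    simpa [hIdef, hBdef] using this
  have hI0 : ∀ k, 0 ≤ I k := fun k =>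
    le_trans (mul_nonneg (by positivity) (hB0 k)) (htrace k)
  set T : ℕ → ℝ := fun n =>
    (2 * ((n : ℝ) + 2) - 1) * (u (n + 2) 0 * (starRingEnd ℂ) (u (n + 1) 0)).im with hTdef
  set g : ℕ → ℝ := fun n => (2 * (n : ℝ) + 3) / 2 * B (n + 1) with hgdef
  set h : ℕ → ℝ := fun n => (2 * (n : ℝ) + 3) / 2 * B n with hhdef
  have habs : ∀ n, |T n| ≤ g n + h n := by
    intro n
    have h1 : |(u (n + 2) 0 * (starRingEnd ℂ) (u (n + 1) 0)).im|
        ≤ ‖u (n + 2) 0‖ * ‖u (n + 1) 0‖ := by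
      calc |(u (n + 2) 0 * (starRingEnd ℂ) (u (n + 1) 0)).im|
          ≤ ‖u (n + 2) 0 * (starRingEnd ℂ) (u (n + 1) 0)‖ := Complex.abs_im_le_norm _
      _ = ‖u (n + 2) 0‖ * ‖u (n + 1) 0‖ := by rw [norm_mul]; simp
    have h2 : ‖u (n + 2) 0‖ * ‖u (n + 1) 0‖ ≤ (B (n + 1) + B n) / 2 := by
      rw [hBdef]
      nlinarith [sq_nonneg (‖u (n + 2) 0‖ - ‖u (n + 1) 0‖)]
    rw [hTdef]
    simp only [abs_mul]
    have hc : |2 * ((n : ℝ) + 2) - 1| = 2 * (n : ℝ) + 3 := by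
      have hn : (0:ℝ) ≤ (n:ℝ) := Nat.cast_nonneg n
      rw [_root_.abs_of_nonneg (by linarith)]; ring
    rw [hc, hgdef, hhdef]
    have hcpos : (0:ℝ) ≤ 2 * (n : ℝ) + 3 := by positivity
    calc (2 * (n : ℝ) + 3) * |(u (n + 2) 0 * (starRingEnd ℂ) (u (n + 1) 0)).im|
        ≤ (2 * (n : ℝ) + 3) * ((B (n + 1) + B n) / 2) :=
          mul_le_mul_of_nonneg_left (h1.trans h2) hcpos
    _ = (2 * (n : ℝ) + 3) / 2 * B (n + 1) + (2 * (n : ℝ) + 3) / 2 * B n := by ring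
  -- bounds of g and h by I
  have hg_le : ∀ n, g n ≤ I (n + 1) / 2 := by
    intro n
    have := htrace (n + 1)
    have hb := hB0 (n + 1)
    rw [hgdef]
    push_cast at this ⊢
    nlinarith
  have hh_le : ∀ n, h n ≤ I n := by
    intro n
    have := htrace n
    have hb := hB0 n
    rw [hhdef]
    nlinarith
  have hg0 : ∀ n, 0 ≤ g n := fun n => mul_nonneg (by positivity) (hB0 _)
  have hh0 : ∀ n, 0 ≤ h n := fun n => mul_nonneg (by positivity) (hB0 _)
  have hIsucc : Summable (fun n => I (n + 1)) := (summable_nat_add_iff 1).2 hsum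
  have hSg : Summable g := Summable.of_nonneg_of_le hg0
    (fun n => (hg_le n).trans (by linarith [hI0 (n+1)])) hIsucc
  have hSh : Summable h := Summable.of_nonneg_of_le hh0 hh_le hsum
  have hSabs : Summable (fun n => |T n|) :=
    Summable.of_nonneg_of_le (fun n => abs_nonneg _) habs (hSg.add hSh)
  refine ⟨hSabs, ?_⟩
  have hST : Summable T := hSabs.of_abs
  have step1 : |∑' n, T n| ≤ ∑' n, |T n| := by
    simpa [Real.norm_eq_abs] using norm_tsum_le_tsum_norm (f := T) (by simpa [Real.norm_eq_abs] using hSabs)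
  have step2 : ∑' n, |T n| ≤ ∑' n, (g n + h n) := Summable.tsum_le_tsum habs hSabs (hSg.add hSh)
  have hShsucc : Summable (fun n => h (n + 1)) := (summable_nat_add_iff 1).2 hSh
  have step3 : ∑' n, (g n + h n) = (∑' n, (g n + h (n + 1))) + h 0 := by
    rw [Summable.tsum_add hSg hSh, Summable.tsum_eq_zero_add hSh, Summable.tsum_add hSg hShsucc]
    ring
  have step4 : ∑' n, (g n + h (n + 1)) ≤ ∑' n, I (n + 1) := by
    refine Summable.tsum_le_tsum ?_ (hSg.add hShsucc) hIsucc
    intro n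
    have h1 := hg_le n
    have h2 : h (n + 1) ≤ I (n + 1) / 2 + (I (n+1)/2 - g n) := by
      have ht := htrace (n + 1)
      have hb := hB0 (n + 1)
      rw [hhdef, hgdef]
      push_cast
      push_cast at ht
      nlinarith
    linarith
  have step5 : h 0 ≤ I 0 := by
    have := htrace 0
    have hb := hB0 0
    rw [hhdef]
    nlinarith
  have step6 : ∑' n, I n = I 0 + ∑' n, I (n + 1) := Summable.tsum_eq_zero_add hsum
  calc |∑' n, T n| ≤ ∑' n, |T n| := step1
  _ ≤ ∑' n, (g n + h n) := step2
  _ = (∑' n, (g n + h (n + 1))) + h 0 := step3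
  _ ≤ (∑' n, I (n + 1)) + I 0 := add_le_add step4 step5
  _ = ∑' n, I n := by rw [step6]; ring
end

section
/- For integers n ≥ 3 define j_n := (n − 1/2) / ( 2 (n²−1)^{1/4} (n²−2n)^{1/4} ). Then j_n > 1/2 for every n ≥ 3, and there exists a constant C > 0 such that j_n − 1/2 ≤ C·n^{−2} for all n ≥ 3; in particular j_n → 1/2 as n → ∞. -/
open Real Filter

lemma jac_bounds (n : ℕ) (hn : 3 ≤ n) :
    1 / 2 < ((n : ℝ) - 1 / 2) /
        (2 * ((n : ℝ) ^ 2 - 1) ^ ((1 : ℝ) / 4) * ((n : ℝ) ^ 2 - 2 * n) ^ ((1 : ℝ) / 4)) ∧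
    ((n : ℝ) - 1 / 2) /
        (2 * ((n : ℝ) ^ 2 - 1) ^ ((1 : ℝ) / 4) * ((n : ℝ) ^ 2 - 2 * n) ^ ((1 : ℝ) / 4))
      - 1 / 2 ≤ 5 * (n : ℝ) ^ (-(2 : ℝ)) := by
  have hx : (3:ℝ) ≤ (n:ℝ) := by exact_mod_cast hn
  set x : ℝ := (n:ℝ) with hxdef
  have hx0 : 0 < x := by linarith
  have ha : (0:ℝ) ≤ x^2 - 1 := by nlinarith
  have hb : (0:ℝ) ≤ x^2 - 2*x := by nlinarith
  set p : ℝ := (x^2-1)*(x^2-2*x) with hpdef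
  have hp : 0 < p := by nlinarith
  set B : ℝ := p ^ ((1:ℝ)/4) with hBdef
  have hB : 0 < B := Real.rpow_pos_of_pos hp _
  have hB4 : B^4 = p := by
    rw [hBdef, ← Real.rpow_natCast (p ^ ((1:ℝ)/4)) 4, ← Real.rpow_mul hp.le]
    norm_num
  have hden : 2 * (x^2-1) ^ ((1:ℝ)/4) * (x^2-2*x) ^ ((1:ℝ)/4) = 2 * B := by
    rw [mul_assoc, ← Real.mul_rpow ha hb]
  rw [hden]
  have hBlt : B < x - 1/2 := by
    refine lt_of_pow_lt_pow_left₀ 4 (by linarith) ?_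
    rw [hB4]; nlinarith
  constructor
  · rw [lt_div_iff₀ (by positivity)]; linarith
  · have ht : x^2 * (x^2)⁻¹ = 1 := mul_inv_cancel₀ (by positivity)
    have ht0 : (0:ℝ) ≤ (x^2)⁻¹ := by positivity
    have hr2 : x ^ (-(2:ℝ)) = (x^2)⁻¹ := by
      rw [Real.rpow_neg hx0.le, show (2:ℝ) = ((2:ℕ):ℝ) by norm_num,
        Real.rpow_natCast]
    have step : (x-1/2)^4 * x^2 ≤ p * (x^2+40) := by
      nlinarith [sq_nonneg x, sq_nonneg (x-3), mul_nonneg (mul_nonneg hx0.le hx0.le) hx0.le,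
        mul_nonneg (mul_nonneg (mul_nonneg hx0.le hx0.le) hx0.le) hx0.le]
    have h14 : (1:ℝ) + 40*(x^2)⁻¹ ≤ (1+10*(x^2)⁻¹)^4 := by
      nlinarith [sq_nonneg ((x^2)⁻¹), mul_nonneg (mul_nonneg ht0 ht0) ht0,
        sq_nonneg ((x^2)⁻¹*(x^2)⁻¹)]
    have hkey : x - 1/2 ≤ B * (1 + 10*(x^2)⁻¹) := by
      refine le_of_pow_le_pow_left₀ (n := 4) (by norm_num) (by positivity) ?_
      have e1 : (x-1/2)^4 = ((x-1/2)^4 * x^2) * (x^2)⁻¹ := by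
        field_simp
      have e2 : p * (1+40*(x^2)⁻¹) = (p*(x^2+40)) * (x^2)⁻¹ := by
        field_simp
      calc (x-1/2)^4 = ((x-1/2)^4 * x^2) * (x^2)⁻¹ := e1
        _ ≤ (p*(x^2+40)) * (x^2)⁻¹ := mul_le_mul_of_nonneg_right step ht0
        _ = p * (1+40*(x^2)⁻¹) := e2.symm
        _ ≤ p * (1+10*(x^2)⁻¹)^4 := mul_le_mul_of_nonneg_left h14 hp.le
        _ = (B * (1+10*(x^2)⁻¹))^4 := by rw [mul_pow, hB4]
    rw [hr2, sub_le_iff_le_add, div_le_iff₀ (by positivity)]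
    have : (5*(x^2)⁻¹ + 1/2) * (2*B) = B * (1 + 10*(x^2)⁻¹) := by ring
    linarith [hkey]

/-- The off-diagonal Jacobi entries
`j_n = (n - 1/2) / (2 (n²-1)^{1/4} (n²-2n)^{1/4})` satisfy `j_n > 1/2` for `n ≥ 3`,
`j_n - 1/2 = O(n^{-2})`, and in particular `j_n → 1/2`. -/
theorem jacobi_entries_asymptotics :
    (∀ n : ℕ, 3 ≤ n →
        1 / 2 < ((n : ℝ) - 1 / 2) /
          (2 * ((n : ℝ) ^ 2 - 1) ^ ((1 : ℝ) / 4) * ((n : ℝ) ^ 2 - 2 * n) ^ ((1 : ℝ) / 4))) ∧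
      (∃ C : ℝ, 0 < C ∧ ∀ n : ℕ, 3 ≤ n →
        ((n : ℝ) - 1 / 2) /
            (2 * ((n : ℝ) ^ 2 - 1) ^ ((1 : ℝ) / 4) * ((n : ℝ) ^ 2 - 2 * n) ^ ((1 : ℝ) / 4))
          - 1 / 2 ≤ C * (n : ℝ) ^ (-(2 : ℝ))) ∧
      Tendsto (fun n : ℕ =>
          ((n : ℝ) - 1 / 2) /
            (2 * ((n : ℝ) ^ 2 - 1) ^ ((1 : ℝ) / 4) * ((n : ℝ) ^ 2 - 2 * n) ^ ((1 : ℝ) / 4)))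
        atTop (nhds (1 / 2)) := by
  refine ⟨fun n hn => (jac_bounds n hn).1, ⟨5, by norm_num, fun n hn => (jac_bounds n hn).2⟩, ?_⟩
  have h0 : Tendsto (fun n : ℕ => (5:ℝ) * (n:ℝ) ^ (-(2:ℝ))) atTop (nhds 0) := by
    have h := (tendsto_rpow_neg_atTop (y := 2) (by norm_num)).comp
      tendsto_natCast_atTop_atTop
    simpa using h.const_mul 5
  refine tendsto_of_tendsto_of_tendsto_of_le_of_le'
    (h := fun n : ℕ => 1/2 + 5 * (n:ℝ) ^ (-(2:ℝ))) tendsto_const_nhds ?_ ?_ ?_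
  · simpa using tendsto_const_nhds.add h0
  · exact eventually_atTop.2 ⟨3, fun n hn => (jac_bounds n hn).1.le⟩
  · exact eventually_atTop.2 ⟨3, fun n hn => by linarith [(jac_bounds n hn).2]⟩
end
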